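/- arXiv:1601.03320 — 2 statements merged into one kernel-verified Lean document; each statement's English description precedes it below -/
import Mathlib

section
/- Let c > 0, let e, b : ℝ × ℝ³ → ℝ³ be C² fields, let ρ : ℝ × ℝ³ → ℝ be C¹ and j : ℝ × ℝ³ → ℝ³ be C¹. Suppose that for all (t,x): curl_x e(t,x) = −(1/c) ∂_t b(t,x) and curl_x b(t,x) = (1/c) ∂_t e(t,x) + (4π/c) j(t,x), that the continuity equation ∂_t ρ(t,x) + div_x j(t,x) = 0 holds for all (t,x), and that at time t = 0 the constraints div_x e(0,x) = 4π ρ(0,x) and div_x b(0,x) = 0 hold for all x. Then for every t ∈ ℝ and x ∈ ℝ³ one has div_x e(t,x) = 4π ρ(t,x) and div_x b(t,x) = 0. -/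
open MeasureTheory Filter Metric

noncomputable section

/-- Points of physical space `ℝ³`. -/
abbrev V3 : Type := Fin 3 → ℝ

/-- Partial derivative in the `i`-th coordinate direction. -/
def pd (i : Fin 3) (f : V3 → ℝ) (x : V3) : ℝ := fderiv ℝ f x (Pi.single i 1)

/-- Spatial divergence of a vector field. -/
def div3 (F : V3 → V3) (x : V3) : ℝ := ∑ i, pd i (fun y => F y i) x

/-- Spatial curl of a vector field. -/
def curl3 (F : V3 → V3) (x : V3) : V3 :=
  ![pd 1 (fun y => F y 2) x - pd 2 (fun y => F y 1) x,
    pd 2 (fun y => F y 0) x - pd 0 (fun y => F y 2) x,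
    pd 0 (fun y => F y 1) x - pd 1 (fun y => F y 0) x]

/-- Spatial gradient of a scalar field. -/
def grad3 (f : V3 → ℝ) (x : V3) : V3 := fun i => pd i f x

/-- Spatial Laplacian of a scalar field. -/
def lap3 (f : V3 → ℝ) (x : V3) : ℝ := ∑ i, pd i (fun y => pd i f y) x

/-- Componentwise spatial Laplacian of a vector field. -/
def vlap3 (F : V3 → V3) (x : V3) : V3 := fun k => lap3 (fun y => F y k) x

/-- Time derivative of a time-dependent vector field. -/
def dt (F : ℝ → V3 → V3) (t : ℝ) (x : V3) : V3 := fun i => deriv (fun s => F s x i) t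

/-- Second time derivative of a time-dependent vector field. -/
def dt2 (F : ℝ → V3 → V3) (t : ℝ) (x : V3) : V3 :=
  fun i => deriv (fun s => deriv (fun r => F r x i) s) t

section helpers

variable {W : Type*} [NormedAddCommGroup W] [NormedSpace ℝ W]

lemma slice_time (h : ℝ × V3 → W) (hh : Differentiable ℝ h) (t : ℝ) (x : V3) :
    HasDerivAt (fun s => h (s, x)) (fderiv ℝ h (t, x) (1, 0)) t :=
  (hh (t, x)).hasFDerivAt.comp_hasDerivAt t (HasDerivAt.prodMk (hasDerivAt_id t) (hasDerivAt_const t x))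

lemma slice_space (h : ℝ × V3 → W) (hh : Differentiable ℝ h) (t : ℝ) (x : V3) :
    HasFDerivAt (fun y => h (t, y))
      ((fderiv ℝ h (t, x)).comp ((0 : V3 →L[ℝ] ℝ).prod (ContinuousLinearMap.id ℝ V3))) x :=
  (hh (t, x)).hasFDerivAt.comp x (HasFDerivAt.prodMk (hasFDerivAt_const t x) (hasFDerivAt_id x))

lemma pd_slice (h : ℝ × V3 → ℝ) (hh : Differentiable ℝ h) (t : ℝ) (x : V3) (i : Fin 3) :
    pd i (fun y => h (t, y)) x = fderiv ℝ h (t, x) (0, Pi.single i 1) := by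
  rw [pd, (slice_space h hh t x).fderiv]
  simp

lemma mixed (h : ℝ × V3 → ℝ) (hh : ContDiff ℝ 2 h) (t : ℝ) (x : V3) (i : Fin 3) :
    HasDerivAt (fun s => pd i (fun y => h (s, y)) x)
      (pd i (fun y => deriv (fun s => h (s, y)) t) x) t := by
  have hd : Differentiable ℝ h := hh.differentiable (by norm_num)
  have hF1 : ContDiff ℝ 1 (fderiv ℝ h) := hh.fderiv_right (by norm_num)
  have hFd : Differentiable ℝ (fderiv ℝ h) := hF1.differentiable one_ne_zero
  have hsymm : ∀ v w, fderiv ℝ (fderiv ℝ h) (t, x) v w = fderiv ℝ (fderiv ℝ h) (t, x) w v :=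
    fun v w => second_derivative_symmetric (fun y => (hd y).hasFDerivAt)
      (hFd (t, x)).hasFDerivAt v w
  have heq : (fun s => pd i (fun y => h (s, y)) x)
      = fun s => fderiv ℝ h (s, x) (0, Pi.single i 1) :=
    funext fun s => pd_slice h hd s x i
  have h1 : HasDerivAt (fun s => fderiv ℝ h (s, x) ((0:ℝ), Pi.single i 1))
      (fderiv ℝ (fderiv ℝ h) (t, x) (1, 0) (0, Pi.single i 1)) t := by
    have := (ContinuousLinearMap.apply ℝ ℝ ((0:ℝ), Pi.single i (1:ℝ))).hasFDerivAt
      (x := fderiv ℝ h (t, x)) |>.comp_hasDerivAt t (slice_time (fderiv ℝ h) hFd t x)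
    simpa [Function.comp_def] using this
  have h2 : pd i (fun y => deriv (fun s => h (s, y)) t) x
      = fderiv ℝ (fderiv ℝ h) (t, x) (0, Pi.single i 1) (1, 0) := by
    have hfun : (fun y => deriv (fun s => h (s, y)) t) = fun y => fderiv ℝ h (t, y) (1, 0) :=
      funext fun y => (slice_time h hd t y).deriv
    rw [hfun]
    have h3 : HasFDerivAt (fun y => fderiv ℝ h (t, y) ((1:ℝ), (0:V3)))
        ((ContinuousLinearMap.apply ℝ ℝ ((1:ℝ), (0:V3))).comp
          ((fderiv ℝ (fderiv ℝ h) (t, x)).comp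
            ((0 : V3 →L[ℝ] ℝ).prod (ContinuousLinearMap.id ℝ V3)))) x :=
      (ContinuousLinearMap.apply ℝ ℝ ((1:ℝ), (0:V3))).hasFDerivAt.comp x
        (slice_space (fderiv ℝ h) hFd t x)
    rw [pd, h3.fderiv]
    simp
  rw [heq, h2, hsymm]
  exact h1

end helpers

lemma pd_apply_hasFDerivAt (f : V3 → ℝ) (hf : ContDiff ℝ 2 f) (j : Fin 3) (x : V3) :
    HasFDerivAt (fun y => pd j f y)
      ((ContinuousLinearMap.apply ℝ ℝ (Pi.single j 1)).comp (fderiv ℝ (fderiv ℝ f) x)) x := by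
  have hFd : Differentiable ℝ (fderiv ℝ f) := (hf.fderiv_right (m := 1) (by norm_num)).differentiable one_ne_zero
  exact (ContinuousLinearMap.apply ℝ ℝ (Pi.single j 1)).hasFDerivAt.comp x (hFd x).hasFDerivAt

lemma pd_diff (f : V3 → ℝ) (hf : ContDiff ℝ 2 f) (j : Fin 3) :
    Differentiable ℝ (fun y => pd j f y) :=
  fun y => (pd_apply_hasFDerivAt f hf j y).differentiableAt

lemma pd_comm (f : V3 → ℝ) (hf : ContDiff ℝ 2 f) (i j : Fin 3) (x : V3) :
    pd i (fun y => pd j f y) x = pd j (fun y => pd i f y) x := by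
  have hd : Differentiable ℝ f := hf.differentiable (by norm_num)
  have hFd : Differentiable ℝ (fderiv ℝ f) := (hf.fderiv_right (m := 1) (by norm_num)).differentiable one_ne_zero
  have hsymm := second_derivative_symmetric (f' := fderiv ℝ f)
    (fun y => (hd y).hasFDerivAt) (hFd x).hasFDerivAt (Pi.single i 1) (Pi.single j 1)
  rw [pd, (pd_apply_hasFDerivAt f hf j x).fderiv, pd, (pd_apply_hasFDerivAt f hf i x).fderiv]
  simpa using hsymm

lemma pd_sub {f g : V3 → ℝ} {x : V3} (hf : DifferentiableAt ℝ f x)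
    (hg : DifferentiableAt ℝ g x) (i : Fin 3) :
    pd i (fun y => f y - g y) x = pd i f x - pd i g x := by
  simp only [pd, fderiv_fun_sub hf hg]; simp

lemma div3_curl3 (F : V3 → V3) (hF : ∀ k, ContDiff ℝ 2 (fun y => F y k)) (x : V3) :
    div3 (curl3 F) x = 0 := by
  have h0 : (fun y => curl3 F y 0) = fun y => pd 1 (fun z => F z 2) y - pd 2 (fun z => F z 1) y := by
    funext y; simp [curl3]
  have h1 : (fun y => curl3 F y 1) = fun y => pd 2 (fun z => F z 0) y - pd 0 (fun z => F z 2) y := by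
    funext y; simp [curl3]
  have h2 : (fun y => curl3 F y 2) = fun y => pd 0 (fun z => F z 1) y - pd 1 (fun z => F z 0) y := by
    funext y; simp [curl3]
  have hd : ∀ j k, DifferentiableAt ℝ (fun y => pd j (fun z => F z k) y) x :=
    fun j k => pd_diff _ (hF k) j x
  rw [div3, Fin.sum_univ_three, h0, h1, h2,
    pd_sub (hd 1 2) (hd 2 1), pd_sub (hd 2 0) (hd 0 2), pd_sub (hd 0 1) (hd 1 0),
    pd_comm _ (hF 2) 0 1, pd_comm _ (hF 1) 0 2, pd_comm _ (hF 0) 1 2]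
  ring

lemma pd_const_mul {g : V3 → ℝ} {x : V3} (hg : DifferentiableAt ℝ g x) (a : ℝ) (i : Fin 3) :
    pd i (fun y => a * g y) x = a * pd i g x := by
  simp only [pd, fderiv_const_mul hg a]; simp

lemma curl3_comp_diff (F : V3 → V3) (hF : ∀ k, ContDiff ℝ 2 (fun y => F y k)) (i : Fin 3) :
    Differentiable ℝ (fun y => curl3 F y i) := by
  fin_cases i <;>
    simp only [curl3, Matrix.cons_val_zero, Matrix.cons_val_one, Matrix.head_cons,
      Fin.isValue, Matrix.cons_val_two, Matrix.tail_cons] <;>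
    exact (pd_diff _ (hF _) _).sub (pd_diff _ (hF _) _)


/-- The two constraint (divergence) Maxwell equations propagate in time:
if they hold at `t = 0` and the evolution (curl) equations together with the continuity
equation hold for all times, then they hold for all times. -/
theorem statement_0
    (c : ℝ) (hc : 0 < c)
    (e b : ℝ → V3 → V3) (ρ : ℝ → V3 → ℝ) (j : ℝ → V3 → V3)
    (he : ContDiff ℝ 2 (fun p : ℝ × V3 => e p.1 p.2))
    (hb : ContDiff ℝ 2 (fun p : ℝ × V3 => b p.1 p.2))
    (hρ : ContDiff ℝ 1 (fun p : ℝ × V3 => ρ p.1 p.2))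
    (hj : ContDiff ℝ 1 (fun p : ℝ × V3 => j p.1 p.2))
    (faraday : ∀ t x, curl3 (e t) x = -(1/c) • dt b t x)
    (ampere : ∀ t x, curl3 (b t) x = (1/c) • dt e t x + ((4 * Real.pi)/c) • j t x)
    (continuity : ∀ t x, deriv (fun s => ρ s x) t + div3 (j t) x = 0)
    (gaussE0 : ∀ x, div3 (e 0) x = 4 * Real.pi * ρ 0 x)
    (gaussB0 : ∀ x, div3 (b 0) x = 0) :
    ∀ t x, div3 (e t) x = 4 * Real.pi * ρ t x ∧ div3 (b t) x = 0 := by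
  have hcne : c ≠ 0 := ne_of_gt hc
  have heC : ∀ k, ContDiff ℝ 2 (fun p : ℝ × V3 => e p.1 p.2 k) := fun k => contDiff_pi.mp he k
  have hbC : ∀ k, ContDiff ℝ 2 (fun p : ℝ × V3 => b p.1 p.2 k) := fun k => contDiff_pi.mp hb k
  have hjC : ∀ k, ContDiff ℝ 1 (fun p : ℝ × V3 => j p.1 p.2 k) := fun k => contDiff_pi.mp hj k
  have heS : ∀ t k, ContDiff ℝ 2 (fun y => e t y k) :=
    fun t k => (heC k).comp (contDiff_const.prodMk contDiff_id)
  have hbS : ∀ t k, ContDiff ℝ 2 (fun y => b t y k) :=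
    fun t k => (hbC k).comp (contDiff_const.prodMk contDiff_id)
  have hjS : ∀ t k, Differentiable ℝ (fun y => j t y k) :=
    fun t k => ((hjC k).comp (contDiff_const.prodMk contDiff_id)).differentiable one_ne_zero
  have hρd : Differentiable ℝ (fun p : ℝ × V3 => ρ p.1 p.2) := hρ.differentiable one_ne_zero
  -- time derivative of divergence is divergence of time derivative
  have keyB : ∀ t x, HasDerivAt (fun s => div3 (b s) x) (div3 (dt b t) x) t := by
    intro t x
    have := HasDerivAt.fun_sum
      (fun i (_ : i ∈ Finset.univ) => mixed (fun p => b p.1 p.2 i) (hbC i) t x i)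
    simpa [div3, dt] using this
  have keyE : ∀ t x, HasDerivAt (fun s => div3 (e s) x) (div3 (dt e t) x) t := by
    intro t x
    have := HasDerivAt.fun_sum
      (fun i (_ : i ∈ Finset.univ) => mixed (fun p => e p.1 p.2 i) (heC i) t x i)
    simpa [div3, dt] using this
  -- div of dt b vanishes
  have hBdt : ∀ t x, div3 (dt b t) x = 0 := by
    intro t x
    have hbt : ∀ y, dt b t y = (-c) • curl3 (e t) y := by
      intro y
      rw [faraday t y, smul_smul, show (-c) * -(1/c) = 1 by field_simp, one_smul]
    have h1 : div3 (dt b t) x = ∑ i : Fin 3, pd i (fun y => (-c) * curl3 (e t) y i) x := by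
      simp only [div3]
      refine Finset.sum_congr rfl fun i _ => ?_
      congr 1
      funext y
      rw [hbt y, Pi.smul_apply, smul_eq_mul]
    rw [h1]
    have h2 : ∀ i : Fin 3, pd i (fun y => (-c) * curl3 (e t) y i) x
        = (-c) * pd i (fun y => curl3 (e t) y i) x :=
      fun i => pd_const_mul ((curl3_comp_diff _ (heS t) i) x) _ i
    simp only [h2, ← Finset.mul_sum]
    rw [show (∑ i : Fin 3, pd i (fun y => curl3 (e t) y i) x) = div3 (curl3 (e t)) x from rfl,
      div3_curl3 _ (heS t) x, mul_zero]
  -- div of dt e equals -4π div j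
  have hEdt : ∀ t x, div3 (dt e t) x = 4 * Real.pi * deriv (fun s => ρ s x) t := by
    intro t x
    have het : ∀ y, dt e t y = c • curl3 (b t) y - (4 * Real.pi) • j t y := by
      intro y
      rw [ampere t y, smul_add, smul_smul, smul_smul,
        show c * (1/c) = 1 by field_simp, show c * (4 * Real.pi / c) = 4 * Real.pi by field_simp,
        one_smul]
      abel
    have h1 : div3 (dt e t) x = ∑ i : Fin 3,
        pd i (fun y => c * curl3 (b t) y i - (4 * Real.pi) * j t y i) x := by
      simp only [div3]
      refine Finset.sum_congr rfl fun i _ => ?_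
      congr 1
      funext y
      rw [het y, Pi.sub_apply, Pi.smul_apply, Pi.smul_apply, smul_eq_mul, smul_eq_mul]
    rw [h1]
    have h2 : ∀ i : Fin 3, pd i (fun y => c * curl3 (b t) y i - (4 * Real.pi) * j t y i) x
        = c * pd i (fun y => curl3 (b t) y i) x - (4 * Real.pi) * pd i (fun y => j t y i) x := by
      intro i
      rw [pd_sub (((curl3_comp_diff _ (hbS t) i) x).const_mul c) (((hjS t i) x).const_mul _),
        pd_const_mul ((curl3_comp_diff _ (hbS t) i) x), pd_const_mul ((hjS t i) x)]
    simp only [h2, Finset.sum_sub_distrib, ← Finset.mul_sum]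
    rw [show (∑ i : Fin 3, pd i (fun y => curl3 (b t) y i) x) = div3 (curl3 (b t)) x from rfl,
      show (∑ i : Fin 3, pd i (fun y => j t y i) x) = div3 (j t) x from rfl,
      div3_curl3 _ (hbS t) x, mul_zero]
    have hdj : div3 (j t) x = - deriv (fun s => ρ s x) t := by linarith [continuity t x]
    rw [hdj]; ring
  intro t x
  constructor
  · have hf : ∀ s, HasDerivAt (fun r => div3 (e r) x - 4 * Real.pi * ρ r x) 0 s := by
      intro s
      have hρx : HasDerivAt (fun r => ρ r x) (deriv (fun r => ρ r x) s) s :=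
        ((slice_time (fun p : ℝ × V3 => ρ p.1 p.2) hρd s x).differentiableAt).hasDerivAt
      have h := (keyE s x).fun_sub (hρx.const_mul (4 * Real.pi))
      rw [hEdt s x] at h
      simpa using h
    have hconst := is_const_of_deriv_eq_zero (fun s => (hf s).differentiableAt)
      (fun s => (hf s).deriv) t 0
    have h0 : div3 (e 0) x - 4 * Real.pi * ρ 0 x = 0 := by rw [gaussE0]; ring
    have := hconst.trans h0
    linarith [this]
  · have hf : ∀ s, HasDerivAt (fun r => div3 (b r) x) 0 s := by
      intro s
      have h := keyB s x
      rwa [hBdt s x] at h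
    have hconst := is_const_of_deriv_eq_zero (fun s => (hf s).differentiableAt)
      (fun s => (hf s).deriv) t 0
    rw [hconst, gaussB0]
end
end

section
/- Let c > 0, d > z, let ξ = (ξ₁, ξ₂, d) ∈ ℝ³, let η ∈ ℝ³, and let f ∈ C_c(ℝ) satisfy f(t + d/c) = 0 for all t ≥ 0. Let E : ℝ × ℝ³ → ℝ³ be such that E(t,ξ) = f(t + d/c) η for all t ≤ 0 and t ↦ E(t,ξ) is square integrable on (0,∞). Define the reflected wave at the detector point ξ by E^z_j(t,ξ) = ( f(t + d/c) − f(t + d/c + 2(z − d)/c) ) η_j for j = 1,2,3, the intensity I_j(z,ξ) = ∫_0^∞ |E_j(t,ξ) + E^z_j(t,ξ)|² dt, and the combined measurement Ĩ_j(z,ξ) = (1/2) ( I_j(z,ξ) − ∫_0^∞ |E_j(t,ξ)|² dt − ∫_0^∞ |E^z_j(t,ξ)|² dt ). Then for each j: Ĩ_j(z,ξ) = −η_j ∫_{−∞}^∞ ( E_j(t,ξ) − f(t + d/c) η_j ) f(t + (2z − d)/c) dt. -/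
open MeasureTheory Filter

noncomputable section

/-- The combined OCT measurement at a detector point equals the
correlation of the back-scattered field with the reflected reference wave. -/
theorem statement_12
    (c : ℝ) (hc : 0 < c) (d z : ℝ) (hzd : z < d)
    (ξ : V3) (hξ : ξ 2 = d) (η : V3)
    (f : ℝ → ℝ) (hf : Continuous f) (hfc : HasCompactSupport f)
    (hf0 : ∀ t ≥ (0:ℝ), f (t + d / c) = 0)
    (E : ℝ → V3 → V3)
    (hEpast : ∀ t ≤ (0:ℝ), E t ξ = f (t + d / c) • η)
    (hEL2 : MemLp (fun t => E t ξ) 2 (volume.restrict (Set.Ioi 0)))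
    (Ez : Fin 3 → ℝ → ℝ)
    (hEz : ∀ j t, Ez j t = (f (t + d / c) - f (t + d / c + 2 * (z - d) / c)) * η j)
    (I : Fin 3 → ℝ)
    (hI : ∀ j, I j = ∫ t in Set.Ioi (0:ℝ), (E t ξ j + Ez j t)^2)
    (It : Fin 3 → ℝ)
    (hIt : ∀ j, It j = (1/2) * (I j - (∫ t in Set.Ioi (0:ℝ), (E t ξ j)^2)
      - ∫ t in Set.Ioi (0:ℝ), (Ez j t)^2)) :
    ∀ j, It j = -η j * ∫ t, (E t ξ j - f (t + d / c) * η j) * f (t + (2 * z - d) / c) := by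
  intro j
  have hcne : c ≠ 0 := ne_of_gt hc
  -- shift identity
  have hshift : ∀ t : ℝ, t + d / c + 2 * (z - d) / c = t + (2 * z - d) / c := by
    intro t; field_simp; ring
  -- Ez on positive times
  have hEzpos : ∀ t ∈ Set.Ioi (0:ℝ), Ez j t = -(f (t + (2 * z - d) / c) * η j) := by
    intro t ht
    rw [hEz, hf0 t (le_of_lt ht), hshift]
    ring
  have hEzfun : Ez j = fun t => (f (t + d / c) - f (t + d / c + 2 * (z - d) / c)) * η j :=
    funext (hEz j)
  -- component of E is in L²
  have hEjL2 : MemLp (fun t => E t ξ j) 2 (volume.restrict (Set.Ioi 0)) :=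
    ((ContinuousLinearMap.proj (R := ℝ) (φ := fun _ : Fin 3 => ℝ) j).comp_memLp' hEL2)
  -- the reflected wave is continuous with compact support, hence in L²
  have hcomp : ∀ a : ℝ, HasCompactSupport fun t => f (t + a) := by
    intro a
    have : (fun t => f (t + a)) = f ∘ fun t => (Homeomorph.addRight a) t := rfl
    rw [this]
    exact hfc.comp_homeomorph _
  have hEzL2 : MemLp (Ez j) 2 (volume.restrict (Set.Ioi 0)) := by
    have hcont : Continuous (Ez j) := by
      rw [hEzfun]; fun_prop
    have hc2 : HasCompactSupport (Ez j) := by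
      have h1 : HasCompactSupport fun t => f (t + d / c) := hcomp _
      have h2 : HasCompactSupport fun t => f (t + d / c + 2 * (z - d) / c) := by
        have he : (fun t => f (t + d / c + 2 * (z - d) / c)) =
            fun t => f (t + (d / c + 2 * (z - d) / c)) := by
          funext t; ring_nf
        rw [he]; exact hcomp _
      rw [hEzfun]
      refine HasCompactSupport.mul_right ?_
      simp only [sub_eq_add_neg]
      exact h1.add (by simpa [HasCompactSupport, tsupport] using h2 :
        HasCompactSupport fun t => -f (t + d / c + 2 * (z - d) / c))
    exact (hcont.memLp_of_hasCompactSupport (p := 2) hc2).restrict _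
  -- integrability of the three quadratic terms
  have hInt1 : Integrable (fun t => (E t ξ j)^2) (volume.restrict (Set.Ioi 0)) :=
    hEjL2.integrable_sq
  have hInt2 : Integrable (fun t => (Ez j t)^2) (volume.restrict (Set.Ioi 0)) :=
    hEzL2.integrable_sq
  have hInt3 : Integrable (fun t => E t ξ j * Ez j t) (volume.restrict (Set.Ioi 0)) := by
    have := hEjL2.smul (E := ℝ) (𝕜 := ℝ) hEzL2 (p := 2) (q := 2) (r := 1)
    rw [memLp_one_iff_integrable] at this
    have heq : (Ez j • fun t => E t ξ j) = fun t => E t ξ j * Ez j t := by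
      funext t; simp [mul_comm]
    rwa [heq] at this
  -- expand the square
  have hIexp : I j = (∫ t in Set.Ioi (0:ℝ), (E t ξ j)^2)
      + (∫ t in Set.Ioi (0:ℝ), (Ez j t)^2)
      + 2 * ∫ t in Set.Ioi (0:ℝ), E t ξ j * Ez j t := by
    rw [hI]
    have h : ∀ t, (E t ξ j + Ez j t)^2
        = (E t ξ j)^2 + (Ez j t)^2 + 2 * (E t ξ j * Ez j t) := by intro t; ring
    simp_rw [h]
    have hInt12 : Integrable (fun t => (E t ξ j)^2 + (Ez j t)^2)
        (volume.restrict (Set.Ioi 0)) := hInt1.add hInt2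
    have hInt3' : Integrable (fun t => 2 * (E t ξ j * Ez j t))
        (volume.restrict (Set.Ioi 0)) := hInt3.const_mul 2
    rw [integral_add hInt12 hInt3', integral_add hInt1 hInt2, integral_const_mul]
  -- hence It j is the cross term
  have hItcross : It j = ∫ t in Set.Ioi (0:ℝ), E t ξ j * Ez j t := by
    rw [hIt, hIexp]; ring
  -- identify the cross term with the correlation integral
  have hRHS : (∫ t, (E t ξ j - f (t + d / c) * η j) * f (t + (2 * z - d) / c))
      = ∫ t in Set.Ioi (0:ℝ), (E t ξ j - f (t + d / c) * η j) * f (t + (2 * z - d) / c) := by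
    refine (setIntegral_eq_integral_of_forall_compl_eq_zero ?_).symm
    intro t ht
    simp only [Set.mem_Ioi, not_lt] at ht
    have hEj : E t ξ j = f (t + d / c) * η j := by
      rw [hEpast t ht]; simp [mul_comm]
    rw [hEj]; ring
  rw [hItcross, hRHS, ← integral_const_mul]
  refine setIntegral_congr_fun measurableSet_Ioi fun t ht => ?_
  rw [hEzpos t ht, hf0 t (le_of_lt ht)]
  ring
end
end
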